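/- Let M be a matroid with circuit collection 𝒞 and let 𝒜_i be the collections from the construction of the combinatorial derived matroid. If A ∈ 𝒜_{i+1}, then there exists A' ∈ 𝒜_i with |A'| ≤ |A|. -/

import Mathlib

open Set

namespace DM

variable {α : Type*}

/-- A circuit of a matroid: an inclusion-minimal dependent set. -/
def IsCircuit (M : Matroid α) (C : Set α) : Prop :=
  M.Dep C ∧ ∀ D, M.Dep D → D ⊆ C → D = C

/-- The collection 𝒞 of circuits of `M`. -/
def circuits (M : Matroid α) : Set (Set α) := {C | IsCircuit M C}

/-- The rank of a set: the maximal cardinality of an independent subset. -/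
noncomputable def rk (M : Matroid α) (S : Set α) : ℕ :=
  sSup {m : ℕ | ∃ I, I ⊆ S ∧ M.Indep I ∧ I.ncard = m}

/-- The nullity function n(S) = |S| - r(S). -/
noncomputable def nullity (M : Matroid α) (S : Set α) : ℕ := S.ncard - rk M S

/-- The support of a family of sets. -/
def supp (A : Set (Set α)) : Set α := ⋃₀ A

/-- The initial collection 𝒜₀ = {A ⊆ 𝒞 : |A| > n(supp A)}. -/
noncomputable def A0 (M : Matroid α) : Set (Set (Set α)) :=
  {A | A ⊆ circuits M ∧ nullity M (supp A) < A.ncard}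

/-- The operation ε. -/
def eps (X : Set (Set (Set α))) : Set (Set (Set α)) :=
  X ∪ {B | ∃ A₁ ∈ X, ∃ A₂ ∈ X, A₁ ∩ A₂ ∉ X ∧ ∃ C ∈ A₁ ∩ A₂, B = (A₁ ∪ A₂) \ {C}}

/-- The up-closure ↑X = {A ⊆ 𝒞 : ∃ A' ∈ X, A' ⊆ A} within the ground collection 𝒞. -/
def up (𝒞 : Set (Set α)) (X : Set (Set (Set α))) : Set (Set (Set α)) :=
  {A | A ⊆ 𝒞 ∧ ∃ A' ∈ X, A' ⊆ A}

/-- The increasing sequence 𝒜ᵢ with 𝒜₍ᵢ₊₁₎ = ↑ε(𝒜ᵢ). -/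
noncomputable def Ai (M : Matroid α) : ℕ → Set (Set (Set α))
  | 0 => A0 M
  | (i+1) => up (circuits M) (eps (Ai M i))

/-- 𝒜 = ⋃ᵢ 𝒜ᵢ : the collection of dependent sets of the combinatorial derived matroid δM. -/
noncomputable def derivedDep (M : Matroid α) : Set (Set (Set α)) := ⋃ i, Ai M i


lemma mem_Ai_subset_circuits (M : Matroid α) (i : ℕ) {A : Set (Set α)}
    (hA : A ∈ Ai M i) : A ⊆ circuits M := by
  cases i with
  | zero => exact hA.1
  | succ j => exact hA.1

lemma circuits_finite (M : Matroid α) (hE : M.E.Finite) : (circuits M).Finite :=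
  hE.finite_subsets.subset (fun C hC => hC.1.2)

/-- if A ∈ 𝒜_{i+1} then some A' ∈ 𝒜_i has |A'| ≤ |A|. -/
theorem exists_card_le_in_prev (M : Matroid α) (hE : M.E.Finite) (i : ℕ)
    (A : Set (Set α)) (hA : A ∈ Ai M (i + 1)) :
    ∃ A' ∈ Ai M i, A'.ncard ≤ A.ncard := by
  obtain ⟨hAc, A', hA', hsub⟩ := hA
  have hCfin := circuits_finite M hE
  have hAfin : A.Finite := hCfin.subset hAc
  rcases hA' with h | ⟨A₁, h1, A₂, h2, hnot, C, hC, rfl⟩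
  · exact ⟨A', h, Set.ncard_le_ncard hsub hAfin⟩
  · have hA1fin : A₁.Finite := hCfin.subset (mem_Ai_subset_circuits M i h1)
    have hA2fin : A₂.Finite := hCfin.subset (mem_Ai_subset_circuits M i h2)
    have hne : ¬ A₂ ⊆ A₁ := fun hs => hnot (by rwa [Set.inter_eq_self_of_subset_right hs])
    obtain ⟨D, hD2, hD1⟩ := Set.not_subset.mp hne
    have hDne : D ∉ A₁ \ ({C} : Set (Set α)) := fun h => hD1 h.1
    have hins : insert D (A₁ \ {C}) ⊆ (A₁ ∪ A₂) \ {C} := by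
      rintro x (rfl | ⟨hx1, hx2⟩)
      · exact ⟨Or.inr hD2, fun h => hD1 (h ▸ hC.1)⟩
      · exact ⟨Or.inl hx1, hx2⟩
    have key : A₁.ncard ≤ ((A₁ ∪ A₂) \ {C}).ncard := by
      calc A₁.ncard = (A₁ \ {C}).ncard + 1 :=
            (Set.ncard_diff_singleton_add_one hC.1 hA1fin).symm
        _ = (insert D (A₁ \ {C})).ncard :=
            (Set.ncard_insert_of_notMem hDne hA1fin.diff).symm
        _ ≤ _ := Set.ncard_le_ncard hins (hA1fin.union hA2fin).diff
    exact ⟨A₁, h1, key.trans (Set.ncard_le_ncard hsub hAfin)⟩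

end DM
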